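/- For a, b, c ∈ ℂ with c not a nonpositive integer, and for complex x with |x| < 1/2, the Euler transformation holds: ₂F₁(a, b; c; x) = (1−x)^{c−a−b} · ₂F₁(c−a, c−b; c; x). -/

import Mathlib

/-- The Pochhammer symbol `(a)_n = a(a+1)⋯(a+n-1)`. -/
noncomputable def poch (a : ℂ) (n : ℕ) : ℂ := Polynomial.eval a (ascPochhammer ℂ n)

/-- `z` is not a nonpositive integer. -/
def NotNonposInt (z : ℂ) : Prop := ∀ m : ℕ, z ≠ -(m : ℂ)

/-- The Gauss hypergeometric series `₂F₁(a,b;c;x)`. -/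
noncomputable def twoF1 (a b c x : ℂ) : ℂ :=
  ∑' k : ℕ, poch a k * poch b k / (poch c k * (Nat.factorial k)) * x ^ k

open Finset Filter Metric Topology

/-! ### Basic Pochhammer lemmas -/

lemma poch_zero (a : ℂ) : poch a 0 = 1 := by simp [poch]

lemma poch_succ (a : ℂ) (n : ℕ) : poch a (n+1) = poch a n * (a + n) :=
  ascPochhammer_succ_eval n a

lemma poch_add (a : ℂ) (m n : ℕ) : poch a (m + n) = poch a m * poch (a + m) n := by
  have h := congrArg (Polynomial.eval a) (ascPochhammer_mul (S := ℂ) m n)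
  simpa [poch, Polynomial.eval_mul, Polynomial.eval_comp] using h.symm

lemma poch_ne_zero {c : ℂ} (hc : ∀ k : ℕ, c + k ≠ 0) (n : ℕ) : poch c n ≠ 0 := by
  induction n with
  | zero => simp [poch_zero]
  | succ n ih =>
    rw [poch_succ]
    exact mul_ne_zero ih (hc n)

lemma NotNonposInt.add_natCast_ne_zero {c : ℂ} (hc : NotNonposInt c) (k : ℕ) : c + k ≠ 0 := by
  intro h
  exact hc k (by linear_combination h)

/-! ### Vandermonde's identity for Pochhammer symbols -/

lemma desc_smeval_eq_eval (k : ℕ) (z : ℂ) :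
    (descPochhammer ℤ k).smeval z = Polynomial.eval z (descPochhammer ℂ k) := by
  induction k with
  | zero => simp [descPochhammer_zero, Polynomial.smeval_one]
  | succ k ih =>
    rw [descPochhammer_succ_right, Polynomial.smeval_mul, ih,
      descPochhammer_succ_right, Polynomial.eval_mul]
    congr 1
    rw [Polynomial.smeval_sub, Polynomial.smeval_X, Polynomial.smeval_natCast]
    simp

lemma poch_vandermonde (x y : ℂ) (n : ℕ) :
    poch (x + y) n = ∑ k ∈ range (n+1), (n.choose k : ℂ) * (poch x k * poch y (n-k)) := by
  have hmain : poch (x + y) n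
      = (-1)^n * Polynomial.eval (-(x+y)) (descPochhammer ℂ n) := by
    have := ascPochhammer_eval_neg_eq_descPochhammer (R := ℂ) (-(x+y) : ℂ) n
    simpa [poch] using this
  have hadd := Ring.descPochhammer_smeval_add (R := ℂ) (r := -x) (s := -y) n (Commute.all _ _)
  rw [show (-x) + (-y) = -(x+y) by ring, desc_smeval_eq_eval] at hadd
  rw [hmain, hadd, Finset.Nat.sum_antidiagonal_eq_sum_range_succ_mk, mul_sum]
  refine Finset.sum_congr rfl fun k hk => ?_
  have hkn : k ≤ n := Nat.lt_succ_iff.mp (mem_range.mp hk)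
  rw [desc_smeval_eq_eval, desc_smeval_eq_eval]
  have h1 : Polynomial.eval (-x) (descPochhammer ℂ k) = (-1)^k * poch x k := by
    have := ascPochhammer_eval_neg_eq_descPochhammer (R := ℂ) (-x : ℂ) k
    simp only [neg_neg] at this
    rw [poch, this, ← mul_assoc, ← pow_add, ← two_mul, pow_mul]; simp
  have h2 : Polynomial.eval (-y) (descPochhammer ℂ (n-k)) = (-1)^(n-k) * poch y (n-k) := by
    have := ascPochhammer_eval_neg_eq_descPochhammer (R := ℂ) (-y : ℂ) (n-k)
    simp only [neg_neg] at this
    rw [poch, this, ← mul_assoc, ← pow_add, ← two_mul, pow_mul]; simp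
  rw [h1, h2]
  have hsgn : (-1:ℂ)^n * ((-1)^k * (-1)^(n-k)) = 1 := by
    rw [← pow_add, Nat.add_sub_cancel' hkn, ← pow_add, ← two_mul, pow_mul]; simp
  linear_combination ((n.choose k : ℂ) * (poch x k * poch y (n-k))) * hsgn

/-! ### The Pfaff–Saalschütz-type coefficient identity -/

lemma choose_cast_id {k m n : ℕ} (hk : k ≤ m) (hm : m ≤ n) :
    (n.choose k : ℂ) * ((n-k).choose (m-k) : ℂ) = (n.choose m : ℂ) * (m.choose k : ℂ) := by
  rw [Nat.cast_choose ℂ (hk.trans hm), Nat.cast_choose ℂ (by omega : m - k ≤ n - k),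
    Nat.cast_choose ℂ hm, Nat.cast_choose ℂ hk,
    show n - k - (m - k) = n - m by omega]
  have h1 : (Nat.factorial k : ℂ) ≠ 0 := Nat.cast_ne_zero.mpr (Nat.factorial_ne_zero k)
  have h2 : (Nat.factorial (n-k) : ℂ) ≠ 0 := Nat.cast_ne_zero.mpr (Nat.factorial_ne_zero _)
  have h3 : (Nat.factorial (m-k) : ℂ) ≠ 0 := Nat.cast_ne_zero.mpr (Nat.factorial_ne_zero _)
  have h4 : (Nat.factorial (n-m) : ℂ) ≠ 0 := Nat.cast_ne_zero.mpr (Nat.factorial_ne_zero _)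
  have h5 : (Nat.factorial m : ℂ) ≠ 0 := Nat.cast_ne_zero.mpr (Nat.factorial_ne_zero m)
  field_simp

lemma sum_triangle_reindex (n : ℕ) (F : ℕ → ℕ → ℂ) :
    ∑ k ∈ range (n+1), ∑ j ∈ range (n-k+1), F k j
      = ∑ m ∈ range (n+1), ∑ k ∈ range (m+1), F k (m-k) := by
  rw [Finset.sum_sigma', Finset.sum_sigma']
  refine Finset.sum_nbij' (fun p => ⟨p.1 + p.2, p.1⟩) (fun q => ⟨q.2, q.1 - q.2⟩) ?_ ?_ ?_ ?_ ?_
  · rintro ⟨k, j⟩ h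
    simp only [Finset.mem_sigma, Finset.mem_range] at h ⊢
    omega
  · rintro ⟨m, k⟩ h
    simp only [Finset.mem_sigma, Finset.mem_range] at h ⊢
    omega
  · rintro ⟨k, j⟩ h
    simp only [Finset.mem_sigma, Finset.mem_range] at h
    exact Sigma.ext rfl (heq_of_eq (show k + j - k = j by omega))
  · rintro ⟨m, k⟩ h
    simp only [Finset.mem_sigma, Finset.mem_range] at h
    exact Sigma.ext (show k + (m - k) = m by omega) HEq.rfl
  · rintro ⟨k, j⟩ h
    simp only [Finset.mem_sigma, Finset.mem_range] at h
    simp only [Nat.add_sub_cancel_left]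

lemma saalschutz (a b c : ℂ) (n : ℕ) :
    ∑ k ∈ range (n+1), (n.choose k : ℂ) *
      (poch (a+b-c) (n-k) * poch (c-a) k * poch (c-b) k * poch (c+k) (n-k))
    = poch a n * poch b n := by
  have step1 : ∑ k ∈ range (n+1), (n.choose k : ℂ) *
      (poch (a+b-c) (n-k) * poch (c-a) k * poch (c-b) k * poch (c+k) (n-k))
      = ∑ k ∈ range (n+1), ∑ j ∈ range (n-k+1),
        ((n.choose k : ℂ) * ((n-k).choose j : ℂ))
          * (poch (c-a) (k+j) * poch (c-b) k * poch (a+b-c) (n-k) * poch a (n-k-j)) := by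
    refine sum_congr rfl fun k hk => ?_
    have hv : poch (c+k) (n-k) = ∑ j ∈ range (n-k+1),
        ((n-k).choose j : ℂ) * (poch (c-a+k) j * poch a (n-k-j)) := by
      have h := poch_vandermonde (c-a+k) a (n-k)
      rw [show (c-a+(k:ℂ)) + a = c + k by ring] at h
      exact h
    rw [hv]
    simp only [Finset.mul_sum]
    refine sum_congr rfl fun j hj => ?_
    have hpa : poch (c-a) (k+j) = poch (c-a) k * poch (c-a+k) j := poch_add _ k j
    linear_combination (-(n.choose k : ℂ) * ((n-k).choose j : ℂ) * poch (c-b) k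
      * poch (a+b-c) (n-k) * poch a (n-k-j)) * hpa
  rw [step1, sum_triangle_reindex n (fun k j => ((n.choose k : ℂ) * ((n-k).choose j : ℂ))
      * (poch (c-a) (k+j) * poch (c-b) k * poch (a+b-c) (n-k) * poch a (n-k-j)))]
  have step2 : ∀ m ∈ range (n+1),
      ∑ k ∈ range (m+1), ((n.choose k : ℂ) * ((n-k).choose (m-k) : ℂ))
        * (poch (c-a) (k+(m-k)) * poch (c-b) k * poch (a+b-c) (n-k) * poch a (n-k-(m-k)))
      = (n.choose m : ℂ) * (poch (c-a) m * poch (a+b-c) (n-m) * poch a n) := by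
    intro m hm
    have hmn : m ≤ n := Nat.lt_succ_iff.mp (mem_range.mp hm)
    have inner : ∑ k ∈ range (m+1), ((n.choose k : ℂ) * ((n-k).choose (m-k) : ℂ))
        * (poch (c-a) (k+(m-k)) * poch (c-b) k * poch (a+b-c) (n-k) * poch a (n-k-(m-k)))
        = (n.choose m : ℂ) * (poch (c-a) m * poch (a+b-c) (n-m) * poch a (n-m))
            * ∑ k ∈ range (m+1), (m.choose k : ℂ) *
              (poch (c-b) k * poch (a+b-c+(n-m : ℕ)) (m-k)) := by
      rw [Finset.mul_sum]
      refine sum_congr rfl fun k hk => ?_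
      have hkm : k ≤ m := Nat.lt_succ_iff.mp (mem_range.mp hk)
      have e1 : k + (m - k) = m := by omega
      have e2 : n - k - (m - k) = n - m := by omega
      have e3 : poch (a+b-c) (n-k) = poch (a+b-c) (n-m) * poch (a+b-c+(n-m : ℕ)) (m-k) := by
        have h := poch_add (a+b-c) (n-m) (m-k)
        rw [show n - m + (m - k) = n - k by omega] at h
        exact h
      rw [e1, e2, e3, choose_cast_id hkm hmn]
      ring
    rw [inner]
    have hV : ∑ k ∈ range (m+1), (m.choose k : ℂ) *
        (poch (c-b) k * poch (a+b-c+(n-m : ℕ)) (m-k)) = poch (a+(n-m : ℕ)) m := by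
      have h := poch_vandermonde (c-b) (a+b-c+(n-m : ℕ)) m
      rw [show (c-b) + (a+b-c+((n-m : ℕ) : ℂ)) = a + (n-m : ℕ) by ring] at h
      exact h.symm
    rw [hV]
    have hA : poch a (n-m) * poch (a+(n-m : ℕ)) m = poch a n := by
      have h := poch_add a (n-m) m
      rw [show n - m + m = n by omega] at h
      exact h.symm
    calc (n.choose m : ℂ) * (poch (c-a) m * poch (a+b-c) (n-m) * poch a (n-m)) * poch (a+(n-m:ℕ)) m
        = (n.choose m : ℂ) * (poch (c-a) m * poch (a+b-c) (n-m)
            * (poch a (n-m) * poch (a+(n-m:ℕ)) m)) := by ring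
      _ = (n.choose m : ℂ) * (poch (c-a) m * poch (a+b-c) (n-m) * poch a n) := by rw [hA]
  rw [Finset.sum_congr rfl step2]
  have hV2 : ∑ m ∈ range (n+1), (n.choose m : ℂ) * (poch (c-a) m * poch (a+b-c) (n-m))
      = poch b n := by
    have h := poch_vandermonde (c-a) (a+b-c) n
    rw [show (c-a) + (a+b-c) = b by ring] at h
    exact h.symm
  calc ∑ m ∈ range (n+1), (n.choose m : ℂ) * (poch (c-a) m * poch (a+b-c) (n-m) * poch a n)
      = (∑ m ∈ range (n+1), (n.choose m : ℂ) * (poch (c-a) m * poch (a+b-c) (n-m))) * poch a n := by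
        rw [Finset.sum_mul]; exact Finset.sum_congr rfl fun m _ => by ring
    _ = poch b n * poch a n := by rw [hV2]
    _ = poch a n * poch b n := by ring

/-- The coefficient identity in division form. -/
lemma division_form (a b c : ℂ) (hc : ∀ k : ℕ, c + k ≠ 0) (n : ℕ) :
    ∑ k ∈ range (n+1), (poch (a+b-c) k / (Nat.factorial k : ℂ))
        * (poch (c-a) (n-k) * poch (c-b) (n-k) / (poch c (n-k) * (Nat.factorial (n-k) : ℂ)))
    = poch a n * poch b n / (poch c n * (Nat.factorial n : ℂ)) := by
  have hrefl := (Finset.sum_range_reflect (fun k => (poch (a+b-c) k / (Nat.factorial k : ℂ))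
      * (poch (c-a) (n-k) * poch (c-b) (n-k) / (poch c (n-k) * (Nat.factorial (n-k) : ℂ)))) (n+1))
  rw [← hrefl]
  have hterm : ∀ j ∈ range (n+1),
      (poch (a+b-c) (n+1-1-j) / (Nat.factorial (n+1-1-j) : ℂ))
        * (poch (c-a) (n-(n+1-1-j)) * poch (c-b) (n-(n+1-1-j))
            / (poch c (n-(n+1-1-j)) * (Nat.factorial (n-(n+1-1-j)) : ℂ)))
      = (n.choose j : ℂ) * (poch (a+b-c) (n-j) * poch (c-a) j * poch (c-b) j * poch (c+j) (n-j))
          / (poch c n * (Nat.factorial n : ℂ)) := by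
    intro j hj
    have hjn : j ≤ n := Nat.lt_succ_iff.mp (mem_range.mp hj)
    have e1 : n + 1 - 1 - j = n - j := by omega
    have e2 : n - (n - j) = j := by omega
    rw [e1, e2]
    have hsplit : poch c n = poch c j * poch (c+j) (n-j) := by
      have h := poch_add c j (n-j)
      rw [show j + (n - j) = n by omega] at h
      exact h
    have hcj : poch c j ≠ 0 := poch_ne_zero hc j
    have hcn : poch c n ≠ 0 := poch_ne_zero hc n
    have hcjn : poch (c+j) (n-j) ≠ 0 := by
      intro h0
      exact hcn (by rw [hsplit, h0, mul_zero])
    have hf1 : (Nat.factorial j : ℂ) ≠ 0 := Nat.cast_ne_zero.mpr (Nat.factorial_ne_zero _)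
    have hf2 : (Nat.factorial (n-j) : ℂ) ≠ 0 := Nat.cast_ne_zero.mpr (Nat.factorial_ne_zero _)
    have hf3 : (Nat.factorial n : ℂ) ≠ 0 := Nat.cast_ne_zero.mpr (Nat.factorial_ne_zero _)
    rw [Nat.cast_choose ℂ hjn, hsplit]
    field_simp
  rw [Finset.sum_congr rfl hterm, ← Finset.sum_div]
  rw [saalschutz a b c n]

/-! ### Analysis: summability and the binomial series -/

lemma inv_shift_tendsto (w : ℂ) : Tendsto (fun k : ℕ => ((w + k : ℂ))⁻¹) atTop (𝓝 0) := by
  rw [tendsto_zero_iff_norm_tendsto_zero]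
  have hg : Tendsto (fun k : ℕ => ((k : ℝ) - ‖w‖)⁻¹) atTop (𝓝 0) := by
    apply Filter.Tendsto.inv_tendsto_atTop
    exact tendsto_atTop_add_const_right atTop (-‖w‖) tendsto_natCast_atTop_atTop
  refine squeeze_zero' (Eventually.of_forall fun k => norm_nonneg _) ?_ hg
  have hev : ∀ᶠ k : ℕ in atTop, ‖w‖ + 1 ≤ (k : ℝ) := by
    have := tendsto_natCast_atTop_atTop (R := ℝ)
    exact this.eventually_ge_atTop (‖w‖ + 1)
  filter_upwards [hev] with k hk
  have h1 : (0:ℝ) < (k : ℝ) - ‖w‖ := by linarith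
  have h2 : (k : ℝ) - ‖w‖ ≤ ‖w + k‖ := by
    have h := norm_sub_norm_le ((k:ℂ)) (-w)
    simp only [norm_neg, sub_neg_eq_add, Complex.norm_natCast] at h
    calc (k : ℝ) - ‖w‖ ≤ ‖(k:ℂ) + w‖ := h
      _ = ‖w + (k:ℂ)‖ := by rw [add_comm]
  rw [norm_inv]
  exact inv_anti₀ h1 h2

lemma ratio_tendsto (p q r : ℂ) (hr : ∀ k : ℕ, r + k ≠ 0) :
    Tendsto (fun k : ℕ => ‖(p + k) * (q + k) / ((r + k) * ((k : ℂ) + 1))‖) atTop (𝓝 1) := by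
  have h1c : ∀ k : ℕ, (1 : ℂ) + k ≠ 0 := by
    intro k
    have : ((1 + k : ℕ) : ℂ) ≠ 0 := Nat.cast_ne_zero.mpr (by omega)
    simpa [add_comm] using this
  have d1 : Tendsto (fun k : ℕ => (p + k) / (r + k)) atTop (𝓝 1) := by
    have h := (tendsto_const_nhds (x := (p - r)) (f := atTop (α := ℕ))).mul (inv_shift_tendsto r)
    have h' : Tendsto (fun k : ℕ => 1 + (p - r) * (r + k)⁻¹) atTop (𝓝 1) := by
      simpa using (tendsto_const_nhds (x := (1:ℂ)) (f := atTop (α := ℕ))).add h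
    refine h'.congr fun k => ?_
    have hk := hr k
    field_simp
    ring
  have d2 : Tendsto (fun k : ℕ => (q + k) / ((k : ℂ) + 1)) atTop (𝓝 1) := by
    have h := (tendsto_const_nhds (x := (q - 1)) (f := atTop (α := ℕ))).mul (inv_shift_tendsto 1)
    have h' : Tendsto (fun k : ℕ => 1 + (q - 1) * ((k : ℂ) + 1)⁻¹) atTop (𝓝 1) := by
      have h2 := (tendsto_const_nhds (x := (1:ℂ)) (f := atTop (α := ℕ))).add h
      simp only [mul_zero, add_zero] at h2
      refine h2.congr fun k => ?_
      rw [add_comm ((1:ℂ)) ((k:ℂ))]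
    refine h'.congr fun k => ?_
    have hk : ((k:ℂ) + 1) ≠ 0 := by
      have := h1c k
      rwa [add_comm] at this
    field_simp
    ring
  have hmul : Tendsto (fun k : ℕ => (p + k) / (r + k) * ((q + k) / ((k : ℂ) + 1))) atTop (𝓝 1) := by
    simpa using d1.mul d2
  have : Tendsto (fun k : ℕ => (p + k) * (q + k) / ((r + k) * ((k : ℂ) + 1))) atTop (𝓝 1) := by
    refine hmul.congr fun k => ?_
    rw [div_mul_div_comm]
  simpa using this.norm

lemma summable_norm_hyp (p q r x : ℂ) (hr : ∀ k : ℕ, r + k ≠ 0) (hx : ‖x‖ < 1) :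
    Summable (fun k : ℕ => ‖poch p k * poch q k / (poch r k * (Nat.factorial k : ℂ)) * x ^ k‖) := by
  by_cases hx0 : x = 0
  · apply summable_of_ne_finset_zero (s := {0})
    intro k hk
    have : k ≠ 0 := by simpa using hk
    simp [hx0, zero_pow this]
  set t : ℕ → ℂ := fun k => poch p k * poch q k / (poch r k * (Nat.factorial k : ℂ)) * x ^ k with ht
  set l : ℝ := (1 + ‖x‖) / 2 with hl
  have hl1 : l < 1 := by rw [hl]; linarith
  have hxl : ‖x‖ < l := by rw [hl]; linarith
  have hrec : ∀ k : ℕ, t (k + 1) = t k * ((p + k) * (q + k) / ((r + k) * ((k : ℂ) + 1)) * x) := by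
    intro k
    have h1 : poch r k ≠ 0 := poch_ne_zero hr k
    have h2 : r + k ≠ 0 := hr k
    have h3 : ((Nat.factorial k : ℂ)) ≠ 0 := Nat.cast_ne_zero.mpr (Nat.factorial_ne_zero k)
    have h4 : ((k : ℂ) + 1) ≠ 0 := by
      have : ((k + 1 : ℕ) : ℂ) ≠ 0 := Nat.cast_ne_zero.mpr (Nat.succ_ne_zero _)
      simpa using this
    rw [ht]
    simp only [poch_succ, pow_succ, Nat.factorial_succ]
    push_cast
    field_simp
  have htend : Tendsto (fun k : ℕ => ‖(p + k) * (q + k) / ((r + k) * ((k : ℂ) + 1)) * x‖)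
      atTop (𝓝 ‖x‖) := by
    simp only [norm_mul]
    have := (ratio_tendsto p q r hr).mul_const ‖x‖
    simpa using this
  have hev : ∀ᶠ k : ℕ in atTop, ‖(p + k) * (q + k) / ((r + k) * ((k : ℂ) + 1)) * x‖ ≤ l :=
    htend.eventually_le_const hxl
  refine summable_of_ratio_norm_eventually_le hl1 ?_
  filter_upwards [hev] with k hk
  rw [norm_norm, norm_norm]
  have : ‖t (k+1)‖ ≤ l * ‖t k‖ := by
    rw [hrec k, norm_mul]
    exact (mul_le_mul_of_nonneg_left hk (norm_nonneg _)).trans_eq (mul_comm _ _)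
  exact this

lemma one_sub_mem_slitPlane {z : ℂ} (hz : ‖z‖ < 1) : (1 - z) ∈ Complex.slitPlane := by
  refine Or.inl ?_
  have h1 : z.re ≤ ‖z‖ := by
    calc z.re ≤ |z.re| := le_abs_self _
      _ ≤ ‖z‖ := Complex.abs_re_le_norm z
  simp only [Complex.sub_re, Complex.one_re]
  linarith

lemma hasDerivAt_one_sub_cpow (w : ℂ) {z : ℂ} (hz : ‖z‖ < 1) :
    HasDerivAt (fun z : ℂ => (1 - z) ^ w) (w * (1 - z) ^ (w - 1) * (-1)) z := by
  have h1 : HasDerivAt (fun z : ℂ => 1 - z) (-1) z := by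
    simpa using (hasDerivAt_id z).const_sub 1
  exact h1.cpow_const (one_sub_mem_slitPlane hz)

lemma iteratedDeriv_one_sub_cpow (s : ℂ) (n : ℕ) :
    ∀ z ∈ ball (0 : ℂ) 1,
      iteratedDeriv n (fun z : ℂ => (1 - z) ^ (-s)) z = poch s n * (1 - z) ^ (-s - n) := by
  induction n with
  | zero =>
    intro z hz
    simp [poch_zero, iteratedDeriv_zero]
  | succ n ih =>
    intro z hz
    rw [iteratedDeriv_succ]
    have hev : (iteratedDeriv n (fun z : ℂ => (1 - z) ^ (-s)))
        =ᶠ[𝓝 z] (fun z : ℂ => poch s n * (1 - z) ^ (-s - n)) := by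
      filter_upwards [isOpen_ball.eventually_mem hz] with y hy
      exact ih y hy
    rw [hev.deriv_eq]
    have hz' : ‖z‖ < 1 := mem_ball_zero_iff.mp hz
    have hd : HasDerivAt (fun z : ℂ => poch s n * (1 - z) ^ (-s - n))
        (poch s n * ((-s - n) * (1 - z) ^ (-s - n - 1) * (-1))) z :=
      (hasDerivAt_one_sub_cpow (-s - n) hz').const_mul (poch s n)
    rw [hd.deriv]
    rw [poch_succ]
    rw [show (-s - (n:ℂ) - 1) = -s - ((n:ℕ) + 1 : ℕ) by push_cast; ring]
    ring

/-- The binomial series `(1-x)^(-s) = ∑ (s)_k / k! * x^k` for `‖x‖ < 1`. -/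
lemma hasSum_binomial (s x : ℂ) (hx : ‖x‖ < 1) :
    HasSum (fun k : ℕ => poch s k / (Nat.factorial k : ℂ) * x ^ k) ((1 - x) ^ (-s)) := by
  have hdiff : DifferentiableOn ℂ (fun z : ℂ => (1 - z) ^ (-s)) (ball (0 : ℂ) 1) := by
    intro z hz
    exact (hasDerivAt_one_sub_cpow (-s)
      (mem_ball_zero_iff.mp hz)).differentiableAt.differentiableWithinAt
  have h := Complex.hasSum_taylorSeries_on_ball hdiff (mem_ball_zero_iff.mpr hx)
  have h0 : ∀ k : ℕ, ((Nat.factorial k : ℂ))⁻¹ • (x - 0) ^ k •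
      iteratedDeriv k (fun z : ℂ => (1 - z) ^ (-s)) 0
      = poch s k / (Nat.factorial k : ℂ) * x ^ k := by
    intro k
    rw [iteratedDeriv_one_sub_cpow s k 0 (by simp)]
    simp only [sub_zero, smul_eq_mul, Complex.one_cpow]
    ring
  rw [show (fun k : ℕ => poch s k / (Nat.factorial k : ℂ) * x ^ k)
      = fun k : ℕ => ((Nat.factorial k : ℂ))⁻¹ • (x - 0) ^ k •
        iteratedDeriv k (fun z : ℂ => (1 - z) ^ (-s)) 0 from funext fun k => (h0 k).symm]
  exact h

/-! ### The Euler transformation -/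

theorem euler_transform (a b c : ℂ) (hc : NotNonposInt c) (x : ℂ) (hx : ‖x‖ < 1 / 2) :
    twoF1 a b c x = (1 - x) ^ (c - a - b) * twoF1 (c - a) (c - b) c x := by
  have hcne : ∀ k : ℕ, c + k ≠ 0 := hc.add_natCast_ne_zero
  have h1c : ∀ k : ℕ, (1 : ℂ) + k ≠ 0 := by
    intro k
    have : ((1 + k : ℕ) : ℂ) ≠ 0 := Nat.cast_ne_zero.mpr (by omega)
    simpa [add_comm] using this
  have hx1 : ‖x‖ < 1 := hx.trans (by norm_num)
  set u : ℕ → ℂ := fun k => poch (a+b-c) k / (Nat.factorial k : ℂ) * x ^ k with hu_def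
  set v : ℕ → ℂ := fun k => poch (c-a) k * poch (c-b) k
      / (poch c k * (Nat.factorial k : ℂ)) * x ^ k with hv_def
  have hb : HasSum u ((1-x) ^ (-(a+b-c))) := hasSum_binomial (a+b-c) x hx1
  have hpow : (1 - x) ^ (c - a - b) = (1-x) ^ (-(a+b-c)) := by
    congr 1
    ring
  have hu : Summable (fun k : ℕ => ‖u k‖) := by
    have h := summable_norm_hyp (a+b-c) 1 1 x h1c hx1
    refine h.congr fun k => ?_
    congr 1
    have hp1 : poch 1 k ≠ 0 := poch_ne_zero h1c k
    rw [hu_def]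
    have hf : (Nat.factorial k : ℂ) ≠ 0 := Nat.cast_ne_zero.mpr (Nat.factorial_ne_zero k)
    field_simp
  have hv : Summable (fun k : ℕ => ‖v k‖) := summable_norm_hyp (c-a) (c-b) c x hcne hx1
  have hcauchy : ((∑' k, u k) * ∑' k, v k)
      = ∑' n, ∑ kl ∈ Finset.HasAntidiagonal.antidiagonal n, u kl.1 * v kl.2 :=
    tsum_mul_tsum_eq_tsum_sum_antidiagonal_of_summable_norm hu hv
  have hkey : ∀ n : ℕ, ∑ kl ∈ Finset.HasAntidiagonal.antidiagonal n, u kl.1 * v kl.2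
      = poch a n * poch b n / (poch c n * (Nat.factorial n : ℂ)) * x ^ n := by
    intro n
    rw [Finset.Nat.sum_antidiagonal_eq_sum_range_succ (fun i j => u i * v j) n]
    have hterm : ∀ k ∈ range (n+1), u k * v (n-k)
        = (poch (a+b-c) k / (Nat.factorial k : ℂ))
            * (poch (c-a) (n-k) * poch (c-b) (n-k)
                / (poch c (n-k) * (Nat.factorial (n-k) : ℂ))) * x ^ n := by
      intro k hk
      have hkn : k ≤ n := Nat.lt_succ_iff.mp (mem_range.mp hk)
      have hxp : x ^ k * x ^ (n-k) = x ^ n := by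
        rw [← pow_add]
        congr 1
        omega
      rw [hu_def, hv_def]
      calc poch (a+b-c) k / (Nat.factorial k : ℂ) * x ^ k
            * (poch (c-a) (n-k) * poch (c-b) (n-k)
                / (poch c (n-k) * (Nat.factorial (n-k) : ℂ)) * x ^ (n-k))
          = (poch (a+b-c) k / (Nat.factorial k : ℂ))
              * (poch (c-a) (n-k) * poch (c-b) (n-k)
                  / (poch c (n-k) * (Nat.factorial (n-k) : ℂ))) * (x ^ k * x ^ (n-k)) := by ring
        _ = _ := by rw [hxp]
    rw [Finset.sum_congr rfl hterm, ← Finset.sum_mul, division_form a b c hcne n]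
  calc twoF1 a b c x
      = ∑' n, ∑ kl ∈ Finset.HasAntidiagonal.antidiagonal n, u kl.1 * v kl.2 := by
        unfold twoF1
        exact tsum_congr fun n => (hkey n).symm
    _ = ((∑' k, u k) * ∑' k, v k) := hcauchy.symm
    _ = (1 - x) ^ (c - a - b) * twoF1 (c - a) (c - b) c x := by
        rw [hb.tsum_eq, hpow]
        rfl
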